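/- arXiv:1603.08744 — 3 statements merged into one kernel-verified Lean document; each statement's English description precedes it below -/
import Mathlib

section
/- With the operator A_m as in the context, assume p_i > 0 for all 1 ≤ i ≤ s+1 and fix a multi-index q ∈ ℕ^s. Then there exists a constant K ≥ 1, depending only on q and on (p₁,…,p_{s+1}) but not on m, such that for every m = (m₁,…,m_{s+1}) ∈ ℕ^{s+1} and every r ∈ ℕ^s with r ≤ q one has |A_m[q,r]| ≤ K · (∏_{i=1}^{s} m̃_i^{q_i − r_i}) · m̃_{s+1}^{|q| − |r|}, where m̃_j := max(1, m_j); moreover, if k := m₁ + ⋯ + m_{s+1} ≥ 1, then also |A_m[q,r]| ≤ K · k^{|q|}. -/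
open MvPolynomial Finset

/-- The formal partial derivative `∂_i` as a linear endomorphism of `ℝ[X₁, …, X_s]`. -/
noncomputable def pd (s : ℕ) (i : Fin s) : Module.End ℝ (MvPolynomial (Fin s) ℝ) :=
  (MvPolynomial.pderiv (R := ℝ) i).toLinearMap

/-- The operator `A_m = (∏_{i=1}^s (id + p_i⁻¹ ∂_i)^{m_i}) ∘ (id − p_{s+1}⁻¹ ∑_{i=1}^s ∂_i)^{m_{s+1}}`
on `ℝ[X₁, …, X_s]`, realizing the normalized matrix cocycle `A(ω,k)`. -/
noncomputable def Aop (s : ℕ) (p : Fin (s + 1) → ℝ) (m : Fin (s + 1) → ℕ) :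
    Module.End ℝ (MvPolynomial (Fin s) ℝ) :=
  (List.ofFn fun i : Fin s => (1 + (p i.castSucc)⁻¹ • pd s i) ^ m i.castSucc).prod *
    (1 - (p (Fin.last s))⁻¹ • ∑ i : Fin s, pd s i) ^ m (Fin.last s)

/-- `A_m[q,r]`: the coefficient of the monomial `X^r` in `A_m(X^q)`. -/
noncomputable def Acoeff (s : ℕ) (p : Fin (s + 1) → ℝ) (m : Fin (s + 1) → ℕ)
    (q r : Fin s → ℕ) : ℝ :=
  MvPolynomial.coeff (Finsupp.equivFunOnFinite.symm r)
    (Aop s p m (MvPolynomial.monomial (Finsupp.equivFunOnFinite.symm q) 1))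

namespace AcoeffAux

variable {s : ℕ}

/-- Weighted ℓ¹ norm of coefficients. -/
noncomputable def N (w : (Fin s →₀ ℕ) → ℝ) (f : MvPolynomial (Fin s) ℝ) : ℝ :=
  ∑ u ∈ f.support, |MvPolynomial.coeff u f| * w u

lemma N_nonneg {w : (Fin s →₀ ℕ) → ℝ} (hw : ∀ u, 0 < w u) (f : MvPolynomial (Fin s) ℝ) :
    0 ≤ N w f :=
  Finset.sum_nonneg fun u _ => mul_nonneg (abs_nonneg _) (hw u).le

lemma N_eq_of_subset {w : (Fin s →₀ ℕ) → ℝ} {f : MvPolynomial (Fin s) ℝ}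
    {A : Finset (Fin s →₀ ℕ)} (hA : f.support ⊆ A) :
    N w f = ∑ u ∈ A, |MvPolynomial.coeff u f| * w u := by
  refine Finset.sum_subset hA fun u _ hu => ?_
  rw [MvPolynomial.notMem_support_iff.mp hu]
  simp

lemma N_add_le {w : (Fin s →₀ ℕ) → ℝ} (hw : ∀ u, 0 < w u) (f g : MvPolynomial (Fin s) ℝ) :
    N w (f + g) ≤ N w f + N w g := by
  have h1 : (f + g).support ⊆ f.support ∪ g.support := MvPolynomial.support_add
  rw [N_eq_of_subset h1, N_eq_of_subset (Finset.subset_union_left (s₂ := g.support)),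
    N_eq_of_subset (Finset.subset_union_right (s₁ := f.support)), ← Finset.sum_add_distrib]
  refine Finset.sum_le_sum fun u _ => ?_
  rw [← add_mul]
  refine mul_le_mul_of_nonneg_right ?_ (hw u).le
  simpa [MvPolynomial.coeff_add] using abs_add_le (MvPolynomial.coeff u f) (MvPolynomial.coeff u g)

lemma N_smul {w : (Fin s →₀ ℕ) → ℝ} (c : ℝ) (f : MvPolynomial (Fin s) ℝ) :
    N w (c • f) ≤ |c| * N w f := by
  have h1 : (c • f).support ⊆ f.support := Finsupp.support_smul
  rw [N_eq_of_subset h1, N, Finset.mul_sum]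
  refine Finset.sum_le_sum fun u _ => ?_
  rw [MvPolynomial.coeff_smul, smul_eq_mul, abs_mul, mul_assoc]

lemma N_zero {w : (Fin s →₀ ℕ) → ℝ} : N w (0 : MvPolynomial (Fin s) ℝ) = 0 := by
  simp [N]

lemma N_sum_le {w : (Fin s →₀ ℕ) → ℝ} (hw : ∀ u, 0 < w u) {α : Type*} (A : Finset α)
    (g : α → MvPolynomial (Fin s) ℝ) :
    N w (∑ x ∈ A, g x) ≤ ∑ x ∈ A, N w (g x) := by
  classical
  induction A using Finset.induction_on with
  | empty => simp [N_zero]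
  | insert _ _ hx ih =>
    rw [Finset.sum_insert hx, Finset.sum_insert hx]
    exact (N_add_le hw _ _).trans (by linarith)

lemma N_monomial_le {w : (Fin s →₀ ℕ) → ℝ} (hw : ∀ u, 0 < w u) (u : Fin s →₀ ℕ) (a : ℝ) :
    N w (MvPolynomial.monomial u a) ≤ |a| * w u := by
  rcases eq_or_ne a 0 with rfl | ha
  · simp [N_zero]
  · rw [N_eq_of_subset (MvPolynomial.support_monomial_subset), Finset.sum_singleton,
      MvPolynomial.coeff_monomial, if_pos rfl]

lemma abs_coeff_le_N {w : (Fin s →₀ ℕ) → ℝ} (hw : ∀ u, 0 < w u) (f : MvPolynomial (Fin s) ℝ)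
    (r : Fin s →₀ ℕ) : |MvPolynomial.coeff r f| * w r ≤ N w f := by
  by_cases hr : r ∈ f.support
  · exact Finset.single_le_sum (f := fun u => |MvPolynomial.coeff u f| * w u)
      (fun u _ => mul_nonneg (abs_nonneg _) (hw u).le) hr
  · rw [MvPolynomial.notMem_support_iff.mp hr]
    simpa using N_nonneg hw f

/-- `f` is supported in the box `[0,q]`. -/
def Box (q : Fin s → ℕ) (f : MvPolynomial (Fin s) ℝ) : Prop :=
  ∀ u ∈ f.support, ∀ j, u j ≤ q j

lemma pd_apply (i : Fin s) (f : MvPolynomial (Fin s) ℝ) :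
    pd s i f = ∑ v ∈ f.support, MvPolynomial.monomial (v - Finsupp.single i 1)
      (MvPolynomial.coeff v f * (v i : ℝ)) := by
  have h0 : pd s i f = MvPolynomial.pderiv i f := rfl
  conv_lhs => rw [h0, f.as_sum]
  rw [map_sum]
  exact Finset.sum_congr rfl fun v _ => MvPolynomial.pderiv_monomial

lemma mem_support_pd {i : Fin s} {f : MvPolynomial (Fin s) ℝ} {u : Fin s →₀ ℕ}
    (hu : u ∈ (pd s i f).support) :
    ∃ v ∈ f.support, 1 ≤ v i ∧ u = v - Finsupp.single i 1 := by
  rw [pd_apply] at hu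
  obtain ⟨v, hv, hu2⟩ := Finset.mem_biUnion.mp (MvPolynomial.support_sum hu)
  refine ⟨v, hv, ?_, ?_⟩
  · by_contra h
    have : v i = 0 := by omega
    simp [this] at hu2
  · have := MvPolynomial.support_monomial_subset hu2
    simpa using this

lemma sub_single_apply {v : Fin s →₀ ℕ} {i : Fin s} (j : Fin s) :
    (v - Finsupp.single i 1 : Fin s →₀ ℕ) j = v j - (if j = i then 1 else 0) := by
  rw [Finsupp.tsub_apply, Finsupp.single_apply]
  simp [eq_comm]

lemma sum_sub_single {v : Fin s →₀ ℕ} {i : Fin s} (hv : 1 ≤ v i) :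
    ∑ j, (v - Finsupp.single i 1 : Fin s →₀ ℕ) j = (∑ j, v j) - 1 := by
  rw [Finset.sum_congr rfl fun j _ => sub_single_apply (v := v) (i := i) j]
  have h3 : ∀ j ∈ Finset.univ, (if j = (i : Fin s) then (1 : ℕ) else 0) ≤ v j := by
    intro j _; split
    · subst j; omega
    · omega
  rw [Finset.sum_tsub_distrib _ h3]
  simp

lemma one_le_sum_of_mem {v : Fin s →₀ ℕ} {i : Fin s} (hv : 1 ≤ v i) : 1 ≤ ∑ j, v j :=
  le_trans hv (Finset.single_le_sum (f := fun j => v j) (fun j _ => Nat.zero_le _)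
    (Finset.mem_univ i))

lemma Box_pd {q : Fin s → ℕ} {f : MvPolynomial (Fin s) ℝ} (hf : Box q f) (i : Fin s) :
    Box q (pd s i f) := by
  intro u hu j
  obtain ⟨v, hv, hvi, rfl⟩ := mem_support_pd hu
  calc (v - Finsupp.single i 1 : Fin s →₀ ℕ) j ≤ v j := by rw [sub_single_apply]; omega
    _ ≤ q j := hf v hv j

lemma Box_smul {q : Fin s → ℕ} {f : MvPolynomial (Fin s) ℝ} (hf : Box q f) (c : ℝ) :
    Box q (c • f) := fun u hu => hf u (Finsupp.support_smul hu)

lemma Box_sum {q : Fin s → ℕ} {α : Type*} {A : Finset α} {g : α → MvPolynomial (Fin s) ℝ}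
    (hg : ∀ x ∈ A, Box q (g x)) : Box q (∑ x ∈ A, g x) := by
  classical
  intro u hu
  obtain ⟨x, hx, hu2⟩ := Finset.mem_biUnion.mp (MvPolynomial.support_sum hu)
  exact hg x hx u hu2

lemma N_pd_le {w : (Fin s →₀ ℕ) → ℝ} (hw : ∀ u, 0 < w u) {q : Fin s → ℕ} {B : ℝ}
    {i : Fin s}
    (hH : ∀ u : Fin s →₀ ℕ, (∀ j, u j ≤ q j) →
      (u i : ℝ) * w (u - Finsupp.single i 1) ≤ B * w u)
    {f : MvPolynomial (Fin s) ℝ} (hf : Box q f) :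
    N w (pd s i f) ≤ B * N w f := by
  rw [pd_apply]
  calc N w (∑ v ∈ f.support, MvPolynomial.monomial (v - Finsupp.single i 1)
        (MvPolynomial.coeff v f * (v i : ℝ)))
      ≤ ∑ v ∈ f.support, N w (MvPolynomial.monomial (v - Finsupp.single i 1)
        (MvPolynomial.coeff v f * (v i : ℝ))) := N_sum_le hw _ _
    _ ≤ ∑ v ∈ f.support, B * (|MvPolynomial.coeff v f| * w v) := by
        refine Finset.sum_le_sum fun v hv => ?_
        refine (N_monomial_le hw _ _).trans ?_
        rw [abs_mul, Nat.abs_cast, mul_assoc, mul_left_comm B]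
        exact mul_le_mul_of_nonneg_left (hH v fun j => hf v hv j) (abs_nonneg _)
    _ = B * N w f := by rw [← Finset.mul_sum]; rfl

/-- Generic nilpotency via a degree functional. -/
lemma pow_apply_eq_zero {q : Fin s → ℕ} (T : Module.End ℝ (MvPolynomial (Fin s) ℝ))
    (φ : (Fin s →₀ ℕ) → ℕ)
    (hzero : ∀ f, Box q f → (∀ u ∈ f.support, φ u = 0) → T f = 0)
    (hstep : ∀ f n, Box q f → (∀ u ∈ f.support, φ u ≤ n + 1) →
      (∀ u ∈ (T f).support, φ u ≤ n))
    (hbox : ∀ f, Box q f → Box q (T f)) :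
    ∀ n (f : MvPolynomial (Fin s) ℝ), Box q f → (∀ u ∈ f.support, φ u ≤ n) →
      (T ^ (n + 1)) f = 0 := by
  intro n
  induction n with
  | zero =>
    intro f hf hφ
    rw [pow_one]
    exact hzero f hf fun u hu => Nat.le_zero.mp (hφ u hu)
  | succ n ih =>
    intro f hf hφ
    rw [pow_succ, Module.End.mul_apply]
    exact ih (T f) (hbox f hf) (hstep f n hf hφ)

lemma pd_eq_zero_of {i : Fin s} {f : MvPolynomial (Fin s) ℝ}
    (h : ∀ u ∈ f.support, u i = 0) : pd s i f = 0 := by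
  rw [pd_apply]
  refine Finset.sum_eq_zero fun v hv => ?_
  rw [h v hv]
  simp

lemma pd_pow_eq_zero {q : Fin s → ℕ} (i : Fin s) {f : MvPolynomial (Fin s) ℝ}
    (hf : Box q f) : (pd s i ^ (q i + 1)) f = 0 := by
  refine pow_apply_eq_zero (pd s i) (fun u => u i) ?_ ?_ (fun g hg => Box_pd hg i)
    (q i) f hf (fun u hu => hf u hu i)
  · intro g _ h
    exact pd_eq_zero_of h
  · intro g n _ h u hu
    obtain ⟨v, hv, hvi, rfl⟩ := mem_support_pd hu
    have h2 : v i ≤ n + 1 := h v hv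
    show (v - Finsupp.single i 1 : Fin s →₀ ℕ) i ≤ n
    rw [sub_single_apply]
    simp only [eq_self_iff_true, if_true]
    omega

lemma sum_pd_apply (f : MvPolynomial (Fin s) ℝ) :
    (∑ i : Fin s, pd s i) f = ∑ i : Fin s, pd s i f := by
  exact LinearMap.sum_apply _ _ _

lemma sum_pd_pow_eq_zero {q : Fin s → ℕ} {f : MvPolynomial (Fin s) ℝ} (hf : Box q f) :
    ((∑ i : Fin s, pd s i) ^ ((∑ i, q i) + 1)) f = 0 := by
  refine pow_apply_eq_zero _ (fun u => ∑ j, u j) ?_ ?_ ?_ (∑ i, q i) f hf ?_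
  · intro g _ h
    rw [sum_pd_apply]
    refine Finset.sum_eq_zero fun i _ => pd_eq_zero_of fun u hu => ?_
    have h2 : ∑ j, u j = 0 := h u hu
    have h3 : u i ≤ ∑ j, u j :=
      Finset.single_le_sum (f := fun j => u j) (fun j _ => Nat.zero_le _) (Finset.mem_univ i)
    omega
  · intro g n _ h u hu
    rw [sum_pd_apply] at hu
    obtain ⟨i, _, hu2⟩ := Finset.mem_biUnion.mp (MvPolynomial.support_sum hu)
    obtain ⟨v, hv, hvi, rfl⟩ := mem_support_pd hu2
    show ∑ j, (v - Finsupp.single i 1 : Fin s →₀ ℕ) j ≤ n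
    rw [sum_sub_single hvi]
    have h2 : ∑ j, v j ≤ n + 1 := h v hv
    omega
  · intro g hg
    rw [sum_pd_apply]
    exact Box_sum fun i _ => Box_pd hg i
  · intro u hu
    exact Finset.sum_le_sum fun j _ => hf u hu j

/-- The key binomial bound for a single factor `(1 + c • T) ^ n`. -/
lemma N_one_add_smul_pow_le {w : (Fin s →₀ ℕ) → ℝ} (hw : ∀ u, 0 < w u) {q : Fin s → ℕ}
    (T : Module.End ℝ (MvPolynomial (Fin s) ℝ)) (c : ℝ) (n d : ℕ) (B E : ℝ)
    (hB : 0 ≤ B) (hE : 0 ≤ E)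
    (hT : ∀ f, Box q f → N w (T f) ≤ B * N w f)
    (hTbox : ∀ f, Box q f → Box q (T f))
    (hTnil : ∀ f, Box q f → (T ^ (d + 1)) f = 0)
    (hch : ∀ j, (n.choose j : ℝ) * |c| ^ j * B ^ j ≤ E ^ j)
    (f : MvPolynomial (Fin s) ℝ) (hf : Box q f) :
    N w ((((1 : Module.End ℝ (MvPolynomial (Fin s) ℝ)) + c • T) ^ n) f)
        ≤ (∑ j ∈ Finset.range (d + 1), E ^ j) * N w f ∧
      Box q ((((1 : Module.End ℝ (MvPolynomial (Fin s) ℝ)) + c • T) ^ n) f) := by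
  have hiter : ∀ k (g : MvPolynomial (Fin s) ℝ), Box q g →
      N w ((T ^ k) g) ≤ B ^ k * N w g ∧ Box q ((T ^ k) g) := by
    intro k
    induction k with
    | zero =>
      intro g hg
      rw [pow_zero]
      exact ⟨by simpa using le_refl (N w g), by simpa using hg⟩
    | succ k ih =>
      intro g hg
      rw [pow_succ, Module.End.mul_apply]
      obtain ⟨ih1, ih2⟩ := ih (T g) (hTbox g hg)
      refine ⟨ih1.trans ?_, ih2⟩
      calc B ^ k * N w (T g) ≤ B ^ k * (B * N w g) :=
            mul_le_mul_of_nonneg_left (hT g hg) (pow_nonneg hB k)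
        _ = B ^ (k + 1) * N w g := by ring
  have hexp : ((1 : Module.End ℝ (MvPolynomial (Fin s) ℝ)) + c • T) ^ n
      = ∑ k ∈ Finset.range (n + 1),
          (c • T) ^ k * ((n.choose k : ℕ) : Module.End ℝ (MvPolynomial (Fin s) ℝ)) := by
    rw [add_comm]
    simpa using Commute.add_pow (Commute.one_right (c • T)) n
  have happ : ((((1 : Module.End ℝ (MvPolynomial (Fin s) ℝ)) + c • T) ^ n) f)
      = ∑ k ∈ Finset.range (n + 1), (c ^ k * (n.choose k : ℝ)) • ((T ^ k) f) := by
    rw [hexp, LinearMap.coe_sum, Finset.sum_apply]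
    refine Finset.sum_congr rfl fun k _ => ?_
    rw [Module.End.mul_apply, Module.End.natCast_apply, smul_pow, LinearMap.smul_apply,
      map_nsmul, mul_smul]
    rw [Nat.cast_smul_eq_nsmul]
  constructor
  · rw [happ]
    calc N w (∑ k ∈ Finset.range (n + 1), (c ^ k * (n.choose k : ℝ)) • ((T ^ k) f))
        ≤ ∑ k ∈ Finset.range (n + 1), N w ((c ^ k * (n.choose k : ℝ)) • ((T ^ k) f)) :=
          N_sum_le hw _ _
      _ ≤ ∑ k ∈ Finset.range (n + 1), (if k ≤ d then E ^ k * N w f else 0) := by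
          refine Finset.sum_le_sum fun k _ => ?_
          by_cases hk : k ≤ d
          · rw [if_pos hk]
            refine (N_smul _ _).trans ?_
            have h1 := (hiter k f hf).1
            have h2 : |c ^ k * (n.choose k : ℝ)| = (n.choose k : ℝ) * |c| ^ k := by
              rw [abs_mul, abs_pow, Nat.abs_cast, mul_comm]
            rw [h2]
            calc (n.choose k : ℝ) * |c| ^ k * N w ((T ^ k) f)
                ≤ (n.choose k : ℝ) * |c| ^ k * (B ^ k * N w f) := by
                  refine mul_le_mul_of_nonneg_left h1 ?_
                  positivity
              _ = ((n.choose k : ℝ) * |c| ^ k * B ^ k) * N w f := by ring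
              _ ≤ E ^ k * N w f :=
                  mul_le_mul_of_nonneg_right (hch k) (N_nonneg hw f)
          · rw [if_neg hk]
            have hzero : (T ^ k) f = 0 := by
              have hk2 : k = (k - (d + 1)) + (d + 1) := by omega
              rw [hk2, pow_add, Module.End.mul_apply, hTnil f hf, map_zero]
            rw [hzero, smul_zero, N_zero]
      _ = ∑ k ∈ (Finset.range (n + 1)).filter (· ≤ d), E ^ k * N w f :=
          (Finset.sum_filter _ _).symm
      _ ≤ ∑ k ∈ Finset.range (d + 1), E ^ k * N w f := by
          refine Finset.sum_le_sum_of_subset_of_nonneg ?_ ?_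
          · intro k hk
            simp only [Finset.mem_filter, Finset.mem_range] at hk ⊢
            omega
          · intro k _ _
            exact mul_nonneg (pow_nonneg hE k) (N_nonneg hw f)
      _ = (∑ j ∈ Finset.range (d + 1), E ^ j) * N w f := by rw [Finset.sum_mul]
  · rw [happ]
    exact Box_sum fun k _ => Box_smul (hiter k f hf).2 _

/-- Bound for a product of commuting factors given factorwise bounds. -/
lemma N_listProd_le {w : (Fin s →₀ ℕ) → ℝ} (hw : ∀ u, 0 < w u) {q : Fin s → ℕ} :
    ∀ (n : ℕ) (F : Fin n → Module.End ℝ (MvPolynomial (Fin s) ℝ)) (C : Fin n → ℝ),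
      (∀ i, 0 ≤ C i) →
      (∀ i f, Box q f → N w (F i f) ≤ C i * N w f ∧ Box q (F i f)) →
      ∀ f, Box q f → N w ((List.ofFn F).prod f) ≤ (∏ i, C i) * N w f ∧
        Box q ((List.ofFn F).prod f) := by
  intro n
  induction n with
  | zero =>
    intro F C hC hF f hf
    simp only [List.ofFn_zero, List.prod_nil]
    refine ⟨?_, by simpa using hf⟩
    simp
  | succ n ih =>
    intro F C hC hF f hf
    rw [List.ofFn_succ, List.prod_cons, Module.End.mul_apply]
    obtain ⟨h1, h2⟩ := ih (fun i => F i.succ) (fun i => C i.succ)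
      (fun i => hC _) (fun i => hF _) f hf
    obtain ⟨h3, h4⟩ := hF 0 _ h2
    refine ⟨h3.trans ?_, h4⟩
    rw [Fin.prod_univ_succ]
    calc C 0 * N w ((List.ofFn fun i => F i.succ).prod f)
        ≤ C 0 * ((∏ i : Fin n, C i.succ) * N w f) := mul_le_mul_of_nonneg_left h1 (hC 0)
      _ = (C 0 * ∏ i : Fin n, C i.succ) * N w f := by ring

/-- The constant in the main estimate. -/
noncomputable def Kconst (s : ℕ) (p : Fin (s + 1) → ℝ) (q : Fin s → ℕ) : ℝ :=
  (∏ i : Fin s, ∑ j ∈ Finset.range (q i + 1), ((p i.castSucc)⁻¹ * q i) ^ j) *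
    (∑ j ∈ Finset.range ((∑ i, q i) + 1), ((p (Fin.last s))⁻¹ * (∑ i, q i)) ^ j)

lemma one_le_Kconst (p : Fin (s + 1) → ℝ) (hp : ∀ i, 0 < p i) (q : Fin s → ℕ) :
    1 ≤ Kconst s p q := by
  have hterm : ∀ (c : ℝ) (d : ℕ), 0 ≤ c →
      1 ≤ ∑ j ∈ Finset.range (d + 1), c ^ j := by
    intro c d hc
    have h0 : (0 : ℕ) ∈ Finset.range (d + 1) := by simp
    calc (1 : ℝ) = c ^ 0 := by simp
      _ ≤ ∑ j ∈ Finset.range (d + 1), c ^ j :=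
        Finset.single_le_sum (fun j _ => pow_nonneg hc j) h0
  have h1 : (1 : ℝ) ≤ ∏ i : Fin s, ∑ j ∈ Finset.range (q i + 1),
      ((p i.castSucc)⁻¹ * q i) ^ j := by
    calc (1 : ℝ) = ∏ _i : Fin s, 1 := by simp
      _ ≤ _ := Finset.prod_le_prod (fun _ _ => zero_le_one) (fun i _ => hterm _ _ (by
          have := hp i.castSucc; positivity))
  have h2 : (1 : ℝ) ≤ ∑ j ∈ Finset.range ((∑ i, q i) + 1),
      ((p (Fin.last s))⁻¹ * (∑ i, q i)) ^ j := by
    refine hterm _ _ ?_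
    have := hp (Fin.last s)
    positivity
  calc (1 : ℝ) = 1 * 1 := by ring
    _ ≤ _ := mul_le_mul h1 h2 zero_le_one (by linarith)

/-- Core estimate: the weighted norm of `A_m f` for box-supported `f`. -/
lemma core (p : Fin (s + 1) → ℝ) (hp : ∀ i, 0 < p i) (q : Fin s → ℕ)
    (m : Fin (s + 1) → ℕ) (w : (Fin s →₀ ℕ) → ℝ) (hw : ∀ u, 0 < w u)
    (B : Fin s → ℝ) (Blast : ℝ) (hB : ∀ i, 0 ≤ B i) (hBlast : 0 ≤ Blast)
    (hH : ∀ (i : Fin s) (u : Fin s →₀ ℕ), (∀ j, u j ≤ q j) →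
      (u i : ℝ) * w (u - Finsupp.single i 1) ≤ B i * w u)
    (hch : ∀ (i : Fin s) (j : ℕ), ((m i.castSucc).choose j : ℝ) * |(p i.castSucc)⁻¹| ^ j
      * (B i) ^ j ≤ ((p i.castSucc)⁻¹ * q i) ^ j)
    (hsum : ∑ i, B i ≤ Blast)
    (hch' : ∀ j : ℕ, ((m (Fin.last s)).choose j : ℝ) * |(p (Fin.last s))⁻¹| ^ j
      * Blast ^ j ≤ ((p (Fin.last s))⁻¹ * (∑ i, q i)) ^ j)
    {f : MvPolynomial (Fin s) ℝ} (hf : Box q f) :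
    N w (Aop s p m f) ≤ Kconst s p q * N w f := by
  -- the last factor
  have hSle : ∀ g, Box q g → N w ((∑ i : Fin s, pd s i) g) ≤ Blast * N w g := by
    intro g hg
    rw [sum_pd_apply]
    calc N w (∑ i : Fin s, pd s i g) ≤ ∑ i : Fin s, N w (pd s i g) := N_sum_le hw _ _
      _ ≤ ∑ i : Fin s, B i * N w g :=
        Finset.sum_le_sum fun i _ => N_pd_le hw (hH i) hg
      _ = (∑ i, B i) * N w g := by rw [Finset.sum_mul]
      _ ≤ Blast * N w g := mul_le_mul_of_nonneg_right hsum (N_nonneg hw g)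
  have hSbox : ∀ g, Box q g → Box q ((∑ i : Fin s, pd s i) g) := by
    intro g hg
    rw [sum_pd_apply]
    exact Box_sum fun i _ => Box_pd hg i
  have hlastE : 0 ≤ (p (Fin.last s))⁻¹ * (∑ i, q i) := by
    have := hp (Fin.last s); positivity
  have hlast := N_one_add_smul_pow_le hw (∑ i : Fin s, pd s i) (-(p (Fin.last s))⁻¹)
    (m (Fin.last s)) (∑ i, q i) Blast ((p (Fin.last s))⁻¹ * (∑ i, q i))
    hBlast hlastE hSle hSbox (fun g hg => sum_pd_pow_eq_zero hg)
    (by simpa using hch') f hf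
  have hsub : (1 : Module.End ℝ (MvPolynomial (Fin s) ℝ))
      - (p (Fin.last s))⁻¹ • ∑ i : Fin s, pd s i
      = 1 + (-(p (Fin.last s))⁻¹) • ∑ i : Fin s, pd s i := by
    rw [sub_eq_add_neg]
    congr 1
    exact (neg_smul _ _).symm
  rw [Aop, Module.End.mul_apply, hsub]
  set g := (((1 : Module.End ℝ (MvPolynomial (Fin s) ℝ))
    + (-(p (Fin.last s))⁻¹) • ∑ i : Fin s, pd s i) ^ m (Fin.last s)) f with hg
  obtain ⟨hlast1, hlast2⟩ := hlast
  -- the list of first factors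
  have hfac : ∀ (i : Fin s) (h : MvPolynomial (Fin s) ℝ), Box q h →
      N w (((1 + (p i.castSucc)⁻¹ • pd s i) ^ m i.castSucc) h)
        ≤ (∑ j ∈ Finset.range (q i + 1), ((p i.castSucc)⁻¹ * q i) ^ j) * N w h ∧
      Box q (((1 + (p i.castSucc)⁻¹ • pd s i) ^ m i.castSucc) h) := by
    intro i h hh
    have hE : 0 ≤ (p i.castSucc)⁻¹ * q i := by
      have := hp i.castSucc; positivity
    exact N_one_add_smul_pow_le hw (pd s i) ((p i.castSucc)⁻¹) (m i.castSucc) (q i)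
      (B i) ((p i.castSucc)⁻¹ * q i) (hB i) hE
      (fun g' hg' => N_pd_le hw (hH i) hg') (fun g' hg' => Box_pd hg' i)
      (fun g' hg' => pd_pow_eq_zero i hg') (hch i) h hh
  have hCnonneg : ∀ i : Fin s,
      0 ≤ ∑ j ∈ Finset.range (q i + 1), ((p i.castSucc)⁻¹ * q i) ^ j := by
    intro i
    refine Finset.sum_nonneg fun j _ => pow_nonneg ?_ j
    have := hp i.castSucc; positivity
  obtain ⟨hL, _⟩ := N_listProd_le hw s
    (fun i : Fin s => (1 + (p i.castSucc)⁻¹ • pd s i) ^ m i.castSucc)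
    (fun i : Fin s => ∑ j ∈ Finset.range (q i + 1), ((p i.castSucc)⁻¹ * q i) ^ j)
    hCnonneg (fun i h hh => hfac i h hh) g hlast2
  refine hL.trans ?_
  rw [Kconst, mul_assoc]
  refine mul_le_mul_of_nonneg_left ?_ (Finset.prod_nonneg fun i _ => hCnonneg i)
  exact hlast1



/-- Unified main estimate with an abstract weight given by bases `a i` and `b`. -/
lemma main_est (p : Fin (s + 1) → ℝ) (hp : ∀ i, 0 < p i) (q : Fin s → ℕ)
    (m : Fin (s + 1) → ℕ) (a : Fin s → ℝ) (b : ℝ) (ha : ∀ i, 1 ≤ a i) (hb : 1 ≤ b)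
    (hcha : ∀ (i : Fin s) (j : ℕ), ((m i.castSucc).choose j : ℝ) ≤ (a i * b) ^ j)
    (hchb : ∀ j : ℕ, ((m (Fin.last s)).choose j : ℝ) ≤ b ^ j)
    (r : Fin s → ℕ) (hr : ∀ i, r i ≤ q i) :
    |Acoeff s p m q r| ≤ Kconst s p q *
      ((∏ i, (a i) ^ (q i - r i)) * b ^ ((∑ i, q i) - ∑ i, r i)) := by
  have ha0 : ∀ i, (0 : ℝ) < a i := fun i => lt_of_lt_of_le one_pos (ha i)
  have hb0 : (0 : ℝ) < b := lt_of_lt_of_le one_pos hb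
  set D := ∑ i, q i with hD
  set w : (Fin s →₀ ℕ) → ℝ := fun u =>
    (∏ i, a i ^ ((u i : ℤ) - (q i : ℤ))) * b ^ (((∑ j, u j : ℕ) : ℤ) - (D : ℤ)) with hwdef
  have hw : ∀ u, 0 < w u := fun u =>
    mul_pos (Finset.prod_pos fun i _ => zpow_pos (ha0 i) _) (zpow_pos hb0 _)
  -- the ratio identity
  have hratio : ∀ (i : Fin s) (u : Fin s →₀ ℕ), 1 ≤ u i →
      w (u - Finsupp.single i 1) = w u * ((a i)⁻¹ * b⁻¹) := by
    intro i u hui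
    have h1 : ∀ j : Fin s, a j ^ (((u - Finsupp.single i 1 : Fin s →₀ ℕ) j : ℤ) - (q j : ℤ))
        = a j ^ ((u j : ℤ) - (q j : ℤ)) * (if j = i then (a j)⁻¹ else 1) := by
      intro j
      rw [sub_single_apply]
      by_cases hj : j = i
      · subst hj
        rw [if_pos rfl, if_pos rfl]
        have hcast : ((u j - 1 : ℕ) : ℤ) = (u j : ℤ) - 1 := by omega
        rw [hcast]
        have h2 : (u j : ℤ) - 1 - q j = ((u j : ℤ) - q j) - 1 := by ring
        rw [h2, zpow_sub_one₀ (ha0 j).ne']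
      · rw [if_neg hj, if_neg hj]
        simp
    have h2 : ((∑ j, (u - Finsupp.single i 1 : Fin s →₀ ℕ) j : ℕ) : ℤ) - (D : ℤ)
        = (((∑ j, u j : ℕ) : ℤ) - (D : ℤ)) - 1 := by
      rw [sum_sub_single hui]
      have := one_le_sum_of_mem hui
      omega
    calc w (u - Finsupp.single i 1)
        = (∏ j, a j ^ ((u j : ℤ) - (q j : ℤ)) * (if j = i then (a j)⁻¹ else 1)) *
          b ^ ((((∑ j, u j : ℕ) : ℤ) - (D : ℤ)) - 1) := by
          simp only [hwdef]
          rw [Finset.prod_congr rfl fun j _ => h1 j, h2]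
      _ = w u * ((a i)⁻¹ * b⁻¹) := by
          rw [Finset.prod_mul_distrib, Finset.prod_ite_eq' Finset.univ i fun j => (a j)⁻¹,
            if_pos (Finset.mem_univ i), zpow_sub_one₀ hb0.ne']
          simp only [hwdef]
          ring
  -- hypothesis hH of `core`
  have hH : ∀ (i : Fin s) (u : Fin s →₀ ℕ), (∀ j, u j ≤ q j) →
      (u i : ℝ) * w (u - Finsupp.single i 1) ≤ ((q i : ℝ) * ((a i)⁻¹ * b⁻¹)) * w u := by
    intro i u hu
    have ha' := ha0 i
    rcases Nat.eq_zero_or_pos (u i) with h0 | h0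
    · rw [h0]
      push_cast
      rw [zero_mul]
      have h1 : 0 ≤ (a i)⁻¹ * b⁻¹ := by positivity
      exact mul_nonneg (mul_nonneg (Nat.cast_nonneg _) h1) (hw u).le
    · rw [hratio i u h0]
      have hle : (u i : ℝ) ≤ q i := Nat.cast_le.mpr (hu i)
      have hX : 0 ≤ w u * ((a i)⁻¹ * b⁻¹) :=
        mul_nonneg (hw u).le (by positivity)
      calc (u i : ℝ) * (w u * ((a i)⁻¹ * b⁻¹)) ≤ (q i : ℝ) * (w u * ((a i)⁻¹ * b⁻¹)) :=
            mul_le_mul_of_nonneg_right hle hX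
        _ = (q i : ℝ) * ((a i)⁻¹ * b⁻¹) * w u := by ring
  have hB : ∀ i : Fin s, 0 ≤ (q i : ℝ) * ((a i)⁻¹ * b⁻¹) := by
    intro i
    have := ha0 i
    positivity
  -- hypothesis hch of `core`
  have hch : ∀ (i : Fin s) (j : ℕ), ((m i.castSucc).choose j : ℝ) * |(p i.castSucc)⁻¹| ^ j
      * ((q i : ℝ) * ((a i)⁻¹ * b⁻¹)) ^ j ≤ ((p i.castSucc)⁻¹ * q i) ^ j := by
    intro i j
    have hc0 : (0 : ℝ) < (p i.castSucc)⁻¹ := by have := hp i.castSucc; positivity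
    have habj : (0 : ℝ) < (a i * b) ^ j := by have := ha0 i; positivity
    have h1 : ((m i.castSucc).choose j : ℝ) * ((a i * b) ^ j)⁻¹ ≤ 1 := by
      rw [← div_eq_mul_inv, div_le_one habj]
      exact hcha i j
    have heq : ((m i.castSucc).choose j : ℝ) * |(p i.castSucc)⁻¹| ^ j
        * ((q i : ℝ) * ((a i)⁻¹ * b⁻¹)) ^ j
        = (((m i.castSucc).choose j : ℝ) * ((a i * b) ^ j)⁻¹)
          * ((p i.castSucc)⁻¹ * q i) ^ j := by
      rw [abs_of_pos hc0]
      have hai := (ha0 i).ne'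
      have hbi := hb0.ne'
      field_simp
      rw [mul_assoc, div_pow (q i : ℝ), div_mul_cancel₀ _ (pow_ne_zero _ (mul_ne_zero hai hbi))]
      ring
    rw [heq]
    calc _ ≤ 1 * ((p i.castSucc)⁻¹ * q i) ^ j :=
          mul_le_mul_of_nonneg_right h1 (pow_nonneg (by positivity) j)
      _ = _ := one_mul _
  -- hypothesis hsum of `core`
  have hsum : ∑ i, (q i : ℝ) * ((a i)⁻¹ * b⁻¹) ≤ (D : ℝ) * b⁻¹ := by
    have hterm : ∀ i : Fin s, (q i : ℝ) * ((a i)⁻¹ * b⁻¹) ≤ (q i : ℝ) * b⁻¹ := by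
      intro i
      have h1 : (a i)⁻¹ ≤ 1 := inv_le_one_of_one_le₀ (ha i)
      have h2 : (a i)⁻¹ * b⁻¹ ≤ 1 * b⁻¹ := mul_le_mul_of_nonneg_right h1 (by positivity)
      calc (q i : ℝ) * ((a i)⁻¹ * b⁻¹) ≤ (q i : ℝ) * (1 * b⁻¹) :=
            mul_le_mul_of_nonneg_left h2 (Nat.cast_nonneg _)
        _ = (q i : ℝ) * b⁻¹ := by ring
    calc ∑ i, (q i : ℝ) * ((a i)⁻¹ * b⁻¹) ≤ ∑ i, (q i : ℝ) * b⁻¹ :=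
          Finset.sum_le_sum fun i _ => hterm i
      _ = (D : ℝ) * b⁻¹ := by
          rw [← Finset.sum_mul, hD]
          push_cast
          ring
  have hBlast : (0 : ℝ) ≤ (D : ℝ) * b⁻¹ := by positivity
  -- hypothesis hch' of `core`
  have hch' : ∀ j : ℕ, ((m (Fin.last s)).choose j : ℝ) * |(p (Fin.last s))⁻¹| ^ j
      * ((D : ℝ) * b⁻¹) ^ j ≤ ((p (Fin.last s))⁻¹ * (∑ i, q i)) ^ j := by
    intro j
    have hc0 : (0 : ℝ) < (p (Fin.last s))⁻¹ := by have := hp (Fin.last s); positivity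
    have hbj : (0 : ℝ) < b ^ j := by positivity
    have h1 : ((m (Fin.last s)).choose j : ℝ) * (b ^ j)⁻¹ ≤ 1 := by
      rw [← div_eq_mul_inv, div_le_one hbj]
      exact hchb j
    have heq : ((m (Fin.last s)).choose j : ℝ) * |(p (Fin.last s))⁻¹| ^ j
        * ((D : ℝ) * b⁻¹) ^ j
        = (((m (Fin.last s)).choose j : ℝ) * (b ^ j)⁻¹)
          * ((p (Fin.last s))⁻¹ * (D : ℝ)) ^ j := by
      rw [abs_of_pos hc0]
      have hbi := hb0.ne'
      field_simp
      rw [mul_assoc, div_pow (D : ℝ), div_mul_cancel₀ _ (pow_ne_zero _ hbi)]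
      ring
    rw [heq]
    have hDcast : ((D : ℕ) : ℝ) = ∑ i, (q i : ℝ) := by rw [hD]; push_cast; rfl
    rw [hDcast]
    have hnn : (0 : ℝ) ≤ (p (Fin.last s))⁻¹ * ∑ i, (q i : ℝ) :=
      mul_nonneg hc0.le (Finset.sum_nonneg fun i _ => Nat.cast_nonneg _)
    calc _ ≤ 1 * ((p (Fin.last s))⁻¹ * ∑ i, (q i : ℝ)) ^ j :=
          mul_le_mul_of_nonneg_right h1 (pow_nonneg hnn j)
      _ = _ := one_mul _
  -- box support of the starting monomial
  have hfbox : Box q (MvPolynomial.monomial (R := ℝ)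
      (Finsupp.equivFunOnFinite.symm q) 1) := by
    intro u hu j
    have h1 := MvPolynomial.support_monomial_subset hu
    simp only [Finset.mem_singleton] at h1
    subst h1
    simp
  have hcore := core p hp q m w hw (fun i => (q i : ℝ) * ((a i)⁻¹ * b⁻¹)) ((D : ℝ) * b⁻¹)
    hB hBlast hH hch hsum (by rw [← hD]; exact hch') hfbox
  -- compute the weight at q and at r
  have hwQ : w (Finsupp.equivFunOnFinite.symm q) = 1 := by
    simp only [hwdef]
    have h1 : ∀ i : Fin s, ((Finsupp.equivFunOnFinite.symm q) i : ℤ) - (q i : ℤ) = 0 := by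
      intro i; simp
    have h2 : ((∑ j, (Finsupp.equivFunOnFinite.symm q) j : ℕ) : ℤ) - (D : ℤ) = 0 := by
      simp [hD]
    rw [Finset.prod_congr rfl fun i _ => by rw [h1 i, zpow_zero], h2, zpow_zero]
    simp
  have hwR : w (Finsupp.equivFunOnFinite.symm r)
      = ((∏ i, (a i) ^ (q i - r i)) * b ^ (D - ∑ i, r i))⁻¹ := by
    simp only [hwdef]
    have h1 : ∀ i : Fin s, a i ^ (((Finsupp.equivFunOnFinite.symm r) i : ℤ) - (q i : ℤ))
        = (a i ^ (q i - r i))⁻¹ := by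
      intro i
      have h2 : ((Finsupp.equivFunOnFinite.symm r) i : ℤ) - (q i : ℤ)
          = -((q i - r i : ℕ) : ℤ) := by
        have := hr i
        show (r i : ℤ) - (q i : ℤ) = _
        omega
      rw [h2, zpow_neg, zpow_natCast]
    have h3 : ((∑ j, (Finsupp.equivFunOnFinite.symm r) j : ℕ) : ℤ) - (D : ℤ)
        = -((D - ∑ i, r i : ℕ) : ℤ) := by
      have h4 : ∑ j, (Finsupp.equivFunOnFinite.symm r) j = ∑ j, r j := by simp
      have h5 : ∑ j, r j ≤ D := by
        rw [hD]
        exact Finset.sum_le_sum fun j _ => hr j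
      rw [h4]
      omega
    rw [Finset.prod_congr rfl fun i _ => h1 i, h3, zpow_neg, zpow_natCast,
      Finset.prod_inv_distrib, ← mul_inv]
  -- put everything together
  have hKpos : (0 : ℝ) ≤ Kconst s p q := le_trans zero_le_one (one_le_Kconst p hp q)
  have hNmono : N w (MvPolynomial.monomial (R := ℝ) (Finsupp.equivFunOnFinite.symm q) 1)
      ≤ 1 := by
    have := N_monomial_le hw (Finsupp.equivFunOnFinite.symm q) (1 : ℝ)
    rw [hwQ] at this
    simpa using this
  have habs : |Acoeff s p m q r| * w (Finsupp.equivFunOnFinite.symm r) ≤ Kconst s p q := by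
    rw [Acoeff]
    calc |MvPolynomial.coeff (Finsupp.equivFunOnFinite.symm r)
          (Aop s p m (MvPolynomial.monomial (Finsupp.equivFunOnFinite.symm q) 1))| *
          w (Finsupp.equivFunOnFinite.symm r)
        ≤ N w (Aop s p m (MvPolynomial.monomial (Finsupp.equivFunOnFinite.symm q) 1)) :=
          abs_coeff_le_N hw _ _
      _ ≤ Kconst s p q * N w (MvPolynomial.monomial (Finsupp.equivFunOnFinite.symm q) 1) :=
          hcore
      _ ≤ Kconst s p q * 1 := mul_le_mul_of_nonneg_left hNmono hKpos
      _ = Kconst s p q := mul_one _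
  have hXpos : (0 : ℝ) < (∏ i, (a i) ^ (q i - r i)) * b ^ (D - ∑ i, r i) := by
    refine mul_pos (Finset.prod_pos fun i _ => pow_pos (ha0 i) _) (pow_pos hb0 _)
  rw [hwR] at habs
  calc |Acoeff s p m q r|
      = |Acoeff s p m q r| * ((∏ i, (a i) ^ (q i - r i)) * b ^ (D - ∑ i, r i))⁻¹ *
        ((∏ i, (a i) ^ (q i - r i)) * b ^ (D - ∑ i, r i)) := by
        rw [mul_assoc, inv_mul_cancel₀ hXpos.ne', mul_one]
    _ ≤ Kconst s p q * ((∏ i, (a i) ^ (q i - r i)) * b ^ (D - ∑ i, r i)) :=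
        mul_le_mul_of_nonneg_right habs hXpos.le


lemma choose_cast_le_one (n j : ℕ) (x y : ℕ) (hx : n ≤ x) (hy : 1 ≤ y) :
    ((n.choose j : ℕ) : ℝ) ≤ ((x : ℝ) * (y : ℝ)) ^ j := by
  have h1 : n.choose j ≤ (x * y) ^ j := by
    calc n.choose j ≤ n ^ j := Nat.choose_le_pow n j
      _ ≤ (x * y) ^ j := by
          refine Nat.pow_le_pow_left ?_ j
          calc n ≤ x := hx
            _ = x * 1 := (mul_one x).symm
            _ ≤ x * y := Nat.mul_le_mul_left x hy
  exact_mod_cast h1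

end AcoeffAux

/-- The polynomial growth upper bound of Lemma `matrix-growth`: there is a constant
`K ≥ 1`, depending only on `q` and the `p_i` but not on `m`, with
`|A_m[q,r]| ≤ K (∏_i m̃_i^(q_i−r_i)) m̃_{s+1}^(|q|−|r|)` where `m̃_j = max 1 m_j`; moreover
if `k = m₁ + ⋯ + m_{s+1} ≥ 1` then also `|A_m[q,r]| ≤ K k^|q|`. -/
theorem Acoeff_upper_bound
    (s : ℕ) (hs : 1 ≤ s) (p : Fin (s + 1) → ℝ) (hp : ∀ i, 0 < p i) (q : Fin s → ℕ) :
    ∃ K : ℝ, 1 ≤ K ∧ ∀ m : Fin (s + 1) → ℕ, ∀ r : Fin s → ℕ, (∀ i, r i ≤ q i) →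
      (|Acoeff s p m q r| ≤
        K * (∏ i : Fin s, ((max 1 (m i.castSucc) : ℕ) : ℝ) ^ (q i - r i)) *
          ((max 1 (m (Fin.last s)) : ℕ) : ℝ) ^ (∑ i, q i - ∑ i, r i)) ∧
      (1 ≤ ∑ j, m j →
        |Acoeff s p m q r| ≤ K * ((∑ j, m j : ℕ) : ℝ) ^ (∑ i, q i)) := by
  refine ⟨AcoeffAux.Kconst s p q, AcoeffAux.one_le_Kconst p hp q, fun m r hr => ?_⟩
  have hKpos : (0 : ℝ) ≤ AcoeffAux.Kconst s p q :=
    le_trans zero_le_one (AcoeffAux.one_le_Kconst p hp q)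
  constructor
  · -- first bound
    have h := AcoeffAux.main_est p hp q m
      (fun i => ((max 1 (m i.castSucc) : ℕ) : ℝ)) (((max 1 (m (Fin.last s)) : ℕ) : ℝ))
      (fun i => Nat.one_le_cast.mpr (le_max_left _ _))
      (Nat.one_le_cast.mpr (le_max_left _ _))
      (fun i j => AcoeffAux.choose_cast_le_one _ j _ _ (le_max_right _ _) (le_max_left _ _))
      (fun j => by
        have h1 : (m (Fin.last s)).choose j ≤ (max 1 (m (Fin.last s))) ^ j := by
          calc (m (Fin.last s)).choose j ≤ (m (Fin.last s)) ^ j :=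
                Nat.choose_le_pow _ j
            _ ≤ (max 1 (m (Fin.last s))) ^ j := Nat.pow_le_pow_left (le_max_right _ _) j
        exact_mod_cast h1)
      r hr
    calc |Acoeff s p m q r|
        ≤ AcoeffAux.Kconst s p q *
          ((∏ i : Fin s, ((max 1 (m i.castSucc) : ℕ) : ℝ) ^ (q i - r i)) *
            ((max 1 (m (Fin.last s)) : ℕ) : ℝ) ^ ((∑ i, q i) - ∑ i, r i)) := h
      _ = _ := by rw [mul_assoc]
  · -- second bound
    intro hk
    have hk1 : (1 : ℝ) ≤ ((∑ j, m j : ℕ) : ℝ) := Nat.one_le_cast.mpr hk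
    have h := AcoeffAux.main_est p hp q m
      (fun _ => (1 : ℝ)) (((∑ j, m j : ℕ) : ℝ))
      (fun _ => le_refl 1) hk1
      (fun i j => by
        have h1 : (m i.castSucc).choose j ≤ (∑ j, m j) ^ j := by
          calc (m i.castSucc).choose j ≤ (m i.castSucc) ^ j := Nat.choose_le_pow _ j
            _ ≤ (∑ j, m j) ^ j := Nat.pow_le_pow_left
                (Finset.single_le_sum (f := fun j => m j) (fun _ _ => Nat.zero_le _)
                  (Finset.mem_univ _)) j
        calc (((m i.castSucc).choose j : ℕ) : ℝ) ≤ (((∑ j, m j) ^ j : ℕ) : ℝ) := by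
              exact_mod_cast h1
          _ = ((1 : ℝ) * ((∑ j, m j : ℕ) : ℝ)) ^ j := by push_cast; ring)
      (fun j => by
        have h1 : (m (Fin.last s)).choose j ≤ (∑ j, m j) ^ j := by
          calc (m (Fin.last s)).choose j ≤ (m (Fin.last s)) ^ j := Nat.choose_le_pow _ j
            _ ≤ (∑ j, m j) ^ j := Nat.pow_le_pow_left
                (Finset.single_le_sum (f := fun j => m j) (fun _ _ => Nat.zero_le _)
                  (Finset.mem_univ _)) j
        exact_mod_cast h1)
      r hr
    have hpow : ((∑ j, m j : ℕ) : ℝ) ^ ((∑ i, q i) - ∑ i, r i)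
        ≤ ((∑ j, m j : ℕ) : ℝ) ^ (∑ i, q i) :=
      pow_le_pow_right₀ hk1 (Nat.sub_le _ _)
    calc |Acoeff s p m q r|
        ≤ AcoeffAux.Kconst s p q *
          ((∏ _i : Fin s, (1 : ℝ) ^ (q _i - r _i)) *
            ((∑ j, m j : ℕ) : ℝ) ^ ((∑ i, q i) - ∑ i, r i)) := h
      _ = AcoeffAux.Kconst s p q * ((∑ j, m j : ℕ) : ℝ) ^ ((∑ i, q i) - ∑ i, r i) := by
          simp
      _ ≤ AcoeffAux.Kconst s p q * ((∑ j, m j : ℕ) : ℝ) ^ (∑ i, q i) :=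
          mul_le_mul_of_nonneg_left hpow hKpos
end

section
/- With the operator A_m as in the context, assume 0 < p_i ≤ 1 for all 1 ≤ i ≤ s and fix multi-indices q, r ∈ ℕ^s with r ≤ q. Then there exists a constant K' > 0, depending only on q, such that for every m = (m₁,…,m_{s+1}) ∈ ℕ^{s+1} with m_{s+1} = 0 and m_i > q_i − r_i for all 1 ≤ i ≤ s, one has A_m[q,r] ≥ K' · ∏_{i=1}^{s} m_i^{q_i − r_i}. -/
open MvPolynomial Finset

variable {s : ℕ}

lemma pd_pow_monomial (i : Fin s) (j : ℕ) (u : Fin s →₀ ℕ) :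
    (pd s i ^ j) (monomial u (1:ℝ)) =
      (((u i).descFactorial j : ℝ)) • monomial (u - Finsupp.single i j) 1 := by
  induction j with
  | zero => simp
  | succ j ih =>
    rw [pow_succ', Module.End.mul_apply, ih, map_smul]
    have : (pd s i) (monomial (u - Finsupp.single i j) (1:ℝ)) =
        ((u i - j : ℕ) : ℝ) • monomial (u - Finsupp.single i (j+1)) 1 := by
      show (pderiv i) (monomial (u - Finsupp.single i j) (1:ℝ)) = _
      rw [pderiv_monomial]
      have h1 : (u - Finsupp.single i j) i = u i - j := by
        simp [Finsupp.tsub_apply]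
      have h2 : u - Finsupp.single i j - Finsupp.single i 1 = u - Finsupp.single i (j+1) := by
        rw [tsub_tsub, ← Finsupp.single_add]
      rw [h1, h2, one_mul]
      rw [smul_monomial, smul_eq_mul, mul_one]
    rw [this, smul_smul, Nat.descFactorial_succ]
    push_cast
    ring_nf

lemma T_pow_monomial (i : Fin s) (c : ℝ) (m : ℕ) (u : Fin s →₀ ℕ) :
    (((1 : Module.End ℝ (MvPolynomial (Fin s) ℝ)) + c • pd s i) ^ m) (monomial u (1:ℝ)) =
      ∑ j ∈ Finset.range (m + 1),
        ((m.choose j : ℝ) * c ^ j * ((u i).descFactorial j : ℝ)) •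
          monomial (u - Finsupp.single i j) 1 := by
  rw [add_comm, (Commute.one_right (c • pd s i)).add_pow, LinearMap.sum_apply]
  refine Finset.sum_congr rfl fun j hj => ?_
  rw [one_pow, mul_one, Module.End.mul_apply]
  have hc : ((m.choose j : Module.End ℝ (MvPolynomial (Fin s) ℝ))) (monomial u (1:ℝ))
      = (m.choose j : ℝ) • monomial u 1 := by
    simp [Module.End.natCast_apply, Nat.cast_smul_eq_nsmul]
  rw [hc, map_smul, smul_pow, LinearMap.smul_apply, pd_pow_monomial, smul_smul, smul_smul]

/-- All coefficients nonnegative. -/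
def Nng (P : MvPolynomial (Fin s) ℝ) : Prop := ∀ v, 0 ≤ coeff v P

lemma nng_T_pow_monomial (i : Fin s) {c : ℝ} (hc : 0 ≤ c) (m : ℕ) (u : Fin s →₀ ℕ) :
    Nng ((((1 : Module.End ℝ (MvPolynomial (Fin s) ℝ)) + c • pd s i) ^ m) (monomial u 1)) := by
  intro v
  rw [T_pow_monomial, coeff_sum]
  refine Finset.sum_nonneg fun j _ => ?_
  rw [coeff_smul, coeff_monomial]
  have h1 : (0:ℝ) ≤ (m.choose j : ℝ) * c ^ j * ((u i).descFactorial j : ℝ) := by positivity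
  split <;> simp [h1]

lemma nng_apply (T : Module.End ℝ (MvPolynomial (Fin s) ℝ))
    (hT : ∀ u, Nng (T (monomial u 1))) {P : MvPolynomial (Fin s) ℝ} (hP : Nng P) :
    Nng (T P) := by
  intro v
  conv_rhs => rw [P.as_sum]
  rw [map_sum, coeff_sum]
  refine Finset.sum_nonneg fun u _ => ?_
  have h : (monomial u) (coeff u P) = (coeff u P) • monomial u (1:ℝ) := by
    rw [smul_monomial, smul_eq_mul, mul_one]
  rw [h, map_smul, coeff_smul, smul_eq_mul]
  exact mul_nonneg (hP u) (hT u v)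

lemma T_pow_mono (i : Fin s) {c : ℝ} (hc : 0 ≤ c) (m : ℕ)
    {P Q : MvPolynomial (Fin s) ℝ} (h : ∀ v, coeff v P ≤ coeff v Q) (v : Fin s →₀ ℕ) :
    coeff v ((((1 : Module.End ℝ (MvPolynomial (Fin s) ℝ)) + c • pd s i) ^ m) P)
      ≤ coeff v ((((1 : Module.End ℝ (MvPolynomial (Fin s) ℝ)) + c • pd s i) ^ m) Q) := by
  have hd : Nng ((((1 : Module.End ℝ (MvPolynomial (Fin s) ℝ)) + c • pd s i) ^ m) (Q - P)) := by
    refine nng_apply _ (nng_T_pow_monomial i hc m) ?_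
    intro w; rw [coeff_sub]; linarith [h w]
  have := hd v
  rw [map_sub, coeff_sub] at this
  linarith

lemma T_pow_ge (i : Fin s) {c : ℝ} (hc : 0 ≤ c) {d m : ℕ} (hdm : d ≤ m)
    (u v : Fin s →₀ ℕ) :
    ((m.choose d : ℝ) * c ^ d * ((u i).descFactorial d : ℝ)) *
        coeff v (monomial (u - Finsupp.single i d) (1:ℝ))
      ≤ coeff v ((((1 : Module.End ℝ (MvPolynomial (Fin s) ℝ)) + c • pd s i) ^ m)
          (monomial u 1)) := by
  rw [T_pow_monomial, coeff_sum]
  have hmem : d ∈ Finset.range (m + 1) := Finset.mem_range.mpr (Nat.lt_succ_of_le hdm)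
  have := Finset.single_le_sum (f := fun j => coeff v
      (((m.choose j : ℝ) * c ^ j * ((u i).descFactorial j : ℝ)) •
        monomial (u - Finsupp.single i j) (1:ℝ)))
    (fun j _ => by
      simp only [coeff_smul, coeff_monomial, smul_eq_mul]
      have h1 : (0:ℝ) ≤ (m.choose j : ℝ) * c ^ j * ((u i).descFactorial j : ℝ) := by positivity
      split <;> simp [h1]) hmem
  simpa [coeff_smul] using this

lemma sum_single_apply (dd : Fin s → ℕ) (i : Fin s) :
    ∀ (L : List (Fin s)), i ∉ L →
      ((L.map fun j => Finsupp.single j (dd j)).sum) i = 0 := by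
  intro L
  induction L with
  | nil => simp
  | cons j L ih =>
    intro hi
    rw [List.map_cons, List.sum_cons, Finsupp.add_apply,
      Finsupp.single_apply, if_neg (by simp at hi; tauto), ih (by simp at hi; tauto)]

lemma list_prod_nonneg : ∀ (l : List ℝ), (∀ x ∈ l, (0:ℝ) ≤ x) → 0 ≤ l.prod := by
  intro l
  induction l with
  | nil => simp
  | cons a l ih =>
    intro h
    rw [List.prod_cons]
    exact mul_nonneg (h a (by simp)) (ih fun x hx => h x (by simp [hx]))

lemma key (cc : Fin s → ℝ) (hcc : ∀ i, 0 ≤ cc i) (mm dd : Fin s → ℕ)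
    (hdm : ∀ i, dd i ≤ mm i) :
    ∀ L : List (Fin s), L.Nodup → ∀ (u v : Fin s →₀ ℕ),
      (L.map fun i => ((mm i).choose (dd i) : ℝ) * cc i ^ dd i *
          ((u i).descFactorial (dd i) : ℝ)).prod *
        coeff v (monomial (u - (L.map fun i => Finsupp.single i (dd i)).sum) (1:ℝ))
      ≤ coeff v ((L.map fun i =>
          ((1 : Module.End ℝ (MvPolynomial (Fin s) ℝ)) + cc i • pd s i) ^ mm i).prod
          (monomial u 1)) := by
  intro L
  induction L with
  | nil => simp
  | cons i L ih =>
    intro hnd u v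
    have hiL : i ∉ L := (List.nodup_cons.mp hnd).1
    have hndL : L.Nodup := (List.nodup_cons.mp hnd).2
    conv_rhs => rw [List.map_cons, List.prod_cons, Module.End.mul_apply]
    rw [List.map_cons, List.prod_cons]
    -- monotonicity step
    have step1 := T_pow_mono (c := cc i) i (hcc i) (mm i)
      (P := ((L.map fun j => ((mm j).choose (dd j) : ℝ) * cc j ^ dd j *
          ((u j).descFactorial (dd j) : ℝ)).prod) •
        monomial (u - (L.map fun j => Finsupp.single j (dd j)).sum) (1:ℝ))
      (Q := (L.map fun j =>
          ((1 : Module.End ℝ (MvPolynomial (Fin s) ℝ)) + cc j • pd s j) ^ mm j).prod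
          (monomial u 1))
      (fun w => by rw [coeff_smul, smul_eq_mul]; exact ih hndL u w) v
    refine le_trans ?_ step1
    rw [map_smul, coeff_smul, smul_eq_mul]
    -- now lower bound the application to the monomial
    set S := (L.map fun j => Finsupp.single j (dd j)).sum with hS
    have hSi : (u - S) i = u i - S i := Finsupp.tsub_apply u S i
    have hS0 : S i = 0 := sum_single_apply dd i L hiL
    have hui : (u - S) i = u i := by rw [hSi, hS0]; simp
    have step2 := T_pow_ge (c := cc i) i (hcc i) (hdm i) (u - S) v
    rw [hui] at step2
    have hprodnn : (0:ℝ) ≤ (L.map fun j => ((mm j).choose (dd j) : ℝ) * cc j ^ dd j *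
        ((u j).descFactorial (dd j) : ℝ)).prod := by
      refine list_prod_nonneg _ ?_
      intro x hx
      simp only [List.mem_map] at hx
      obtain ⟨j, _, rfl⟩ := hx
      exact mul_nonneg (mul_nonneg (Nat.cast_nonneg _) (pow_nonneg (hcc j) _))
        (Nat.cast_nonneg _)
    have := mul_le_mul_of_nonneg_left step2 hprodnn
    refine le_trans (le_of_eq ?_) this
    rw [List.map_cons, List.sum_cons]
    have hsub : u - (Finsupp.single i (dd i) + S) = u - S - Finsupp.single i (dd i) := by
      rw [tsub_tsub, add_comm]
    rw [hsub]
    ring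

lemma nat_bound {qq d m : ℕ} (hdq : d ≤ qq) (hdm : d < m) :
    m ^ d ≤ (qq + 1) ^ qq * qq.factorial * m.choose d := by
  have h1 : m ≤ (d + 1) * (m + 1 - d) := by
    obtain ⟨k, hk⟩ := Nat.exists_eq_add_of_le (Nat.succ_le_of_lt hdm)
    subst hk
    have h2 : d + 1 + k + 1 - d = k + 2 := by omega
    rw [h2]
    nlinarith
  calc m ^ d ≤ ((d + 1) * (m + 1 - d)) ^ d := Nat.pow_le_pow_left h1 d
    _ = (d + 1) ^ d * (m + 1 - d) ^ d := mul_pow _ _ _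
    _ ≤ (d + 1) ^ d * m.descFactorial d :=
        Nat.mul_le_mul_left _ (Nat.pow_sub_le_descFactorial m d)
    _ = (d + 1) ^ d * (d.factorial * m.choose d) := by
        rw [Nat.descFactorial_eq_factorial_mul_choose]
    _ ≤ (qq + 1) ^ qq * (qq.factorial * m.choose d) := by
        refine Nat.mul_le_mul ?_ (Nat.mul_le_mul_right _ (Nat.factorial_le hdq))
        calc (d+1)^d ≤ (qq+1)^d := Nat.pow_le_pow_left (by omega) d
          _ ≤ (qq+1)^qq := Nat.pow_le_pow_right (by omega) hdq
    _ = _ := by ring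


/-- The lower bound of Lemma `matrix-growth`: for `q` there is a constant `K' > 0`,
depending only on `q`, such that whenever `r ≤ q`, `0 < p_i ≤ 1` for `1 ≤ i ≤ s`,
the letter `s+1` does not occur (`m_{s+1} = 0`) and `m_i > q_i − r_i` for all `i`,
one has `A_m[q,r] ≥ K' ∏_i m_i^(q_i−r_i)`. -/
theorem Acoeff_lower_bound
    (s : ℕ) (hs : 1 ≤ s) (q : Fin s → ℕ) :
    ∃ K' : ℝ, 0 < K' ∧ ∀ r : Fin s → ℕ, (∀ i, r i ≤ q i) →
      ∀ p : Fin (s + 1) → ℝ, (∀ i : Fin s, 0 < p i.castSucc ∧ p i.castSucc ≤ 1) →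
      ∀ m : Fin (s + 1) → ℕ, m (Fin.last s) = 0 →
        (∀ i : Fin s, q i - r i < m i.castSucc) →
        K' * ∏ i : Fin s, ((m i.castSucc : ℕ) : ℝ) ^ (q i - r i) ≤ Acoeff s p m q r := by
  classical
  refine ⟨∏ i : Fin s, (((q i + 1) ^ (q i) * (q i).factorial : ℕ) : ℝ)⁻¹, ?_, ?_⟩
  · refine Finset.prod_pos fun i _ => ?_
    rw [inv_pos]
    exact_mod_cast Nat.pos_of_ne_zero (by positivity)
  intro r hr p hp m hml hm
  have hccnn : ∀ i : Fin s, 0 ≤ (p i.castSucc)⁻¹ :=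
    fun i => le_of_lt (inv_pos.mpr (hp i).1)
  have hcc1 : ∀ i : Fin s, 1 ≤ (p i.castSucc)⁻¹ :=
    fun i => one_le_inv_iff₀.mpr ⟨(hp i).1, (hp i).2⟩
  have hdm : ∀ i : Fin s, q i - r i ≤ m i.castSucc := fun i => le_of_lt (hm i)
  have hkey := key (fun i => (p i.castSucc)⁻¹) hccnn (fun i => m i.castSucc)
    (fun i => q i - r i) hdm (List.ofFn id)
    (List.nodup_ofFn.mpr Function.injective_id)
    (Finsupp.equivFunOnFinite.symm q) (Finsupp.equivFunOnFinite.symm r)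
  simp only [List.map_ofFn, Function.comp_id] at hkey
  -- identify the sum of singles
  have hD : ((List.ofFn (fun i : Fin s => Finsupp.single i (q i - r i))).sum)
      = Finsupp.equivFunOnFinite.symm (fun i => q i - r i) := by
    rw [Fin.sum_ofFn]
    ext j
    rw [Finsupp.finset_sum_apply]
    have hx : ∀ x : Fin s, (Finsupp.single x (q x - r x)) j
        = if x = j then q x - r x else 0 := by
      intro x; rw [Finsupp.single_apply]
    simp only [hx, Finset.sum_ite_eq', Finset.mem_univ, if_pos]
    simp
  have hsub : Finsupp.equivFunOnFinite.symm q -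
      Finsupp.equivFunOnFinite.symm (fun i => q i - r i) =
      Finsupp.equivFunOnFinite.symm r := by
    ext j
    rw [Finsupp.tsub_apply]
    simp only [Finsupp.coe_equivFunOnFinite_symm]
    have := hr j
    omega
  rw [hD, hsub, Fin.prod_ofFn] at hkey
  simp only [MvPolynomial.coeff_monomial, if_pos rfl, if_true, eq_self_iff_true, mul_one,
    Finsupp.coe_equivFunOnFinite_symm] at hkey
  -- identify RHS with Acoeff
  have hA : Acoeff s p m q r = MvPolynomial.coeff (Finsupp.equivFunOnFinite.symm r)
      ((List.ofFn fun i : Fin s =>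
        ((1 : Module.End ℝ (MvPolynomial (Fin s) ℝ)) + (p i.castSucc)⁻¹ • pd s i)
          ^ m i.castSucc).prod
        (MvPolynomial.monomial (Finsupp.equivFunOnFinite.symm q) 1)) := by
    rw [Acoeff, Aop, hml, pow_zero, mul_one]
  rw [hA]
  refine le_trans ?_ hkey
  rw [← Finset.prod_mul_distrib]
  refine Finset.prod_le_prod (fun i _ => ?_) (fun i _ => ?_)
  · have hN : (0:ℝ) < (((q i + 1) ^ (q i) * (q i).factorial : ℕ) : ℝ) := by
      exact_mod_cast Nat.pos_of_ne_zero (by positivity)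
    positivity
  · have hnat := nat_bound (Nat.sub_le (q i) (r i)) (hm i)
    have hN : (0:ℝ) < (((q i + 1) ^ (q i) * (q i).factorial : ℕ) : ℝ) := by
      exact_mod_cast Nat.pos_of_ne_zero (by positivity)
    have h1 : (((q i + 1) ^ (q i) * (q i).factorial : ℕ) : ℝ)⁻¹ *
        ((m i.castSucc : ℕ) : ℝ) ^ (q i - r i)
        ≤ ((m i.castSucc).choose (q i - r i) : ℝ) := by
      rw [inv_mul_le_iff₀ hN]
      exact_mod_cast hnat
    have h2 : (1:ℝ) ≤ (p i.castSucc)⁻¹ ^ (q i - r i) := one_le_pow₀ (hcc1 i)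
    have h3 : (1:ℝ) ≤ (((q i).descFactorial (q i - r i)) : ℝ) := by
      have : (q i).descFactorial (q i - r i) ≠ 0 := by
        intro h0
        have := Nat.descFactorial_eq_zero_iff_lt.mp h0
        omega
      exact_mod_cast Nat.one_le_iff_ne_zero.mpr this
    have hch : (0:ℝ) ≤ ((m i.castSucc).choose (q i - r i) : ℝ) := Nat.cast_nonneg _
    refine h1.trans ?_
    calc ((m i.castSucc).choose (q i - r i) : ℝ)
        = ((m i.castSucc).choose (q i - r i) : ℝ) * 1 * 1 := by ring
      _ ≤ ((m i.castSucc).choose (q i - r i) : ℝ) *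
            (p i.castSucc)⁻¹ ^ (q i - r i) * (((q i).descFactorial (q i - r i)) : ℝ) := by
          have hc2 : (0:ℝ) ≤ (p i.castSucc)⁻¹ ^ (q i - r i) := le_trans zero_le_one h2
          have e1 : ((m i.castSucc).choose (q i - r i) : ℝ) * 1
              ≤ ((m i.castSucc).choose (q i - r i) : ℝ) * (p i.castSucc)⁻¹ ^ (q i - r i) :=
            mul_le_mul_of_nonneg_left h2 hch
          have e2 : ((m i.castSucc).choose (q i - r i) : ℝ) * (p i.castSucc)⁻¹ ^ (q i - r i) * 1
              ≤ ((m i.castSucc).choose (q i - r i) : ℝ) * (p i.castSucc)⁻¹ ^ (q i - r i) *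
                (((q i).descFactorial (q i - r i)) : ℝ) :=
            mul_le_mul_of_nonneg_left h3 (mul_nonneg hch hc2)
          nlinarith
end

section
/- Let V be a finite set and A : V × V → {0,1} an incidence matrix; let Σ_A := {ω ∈ V^ℕ : A(ω_n, ω_{n+1}) = 1 for all n ≥ 0}, endowed with the metric d(ω,τ) := 2^{−inf{n ≥ 0 : ω_n ≠ τ_n}}, and let σ : Σ_A → Σ_A be the left shift, with Birkhoff sums S_n g := ∑_{j=0}^{n−1} g ∘ σ^j. Assume A is irreducible, i.e. for all u, v ∈ V there exist n ≥ 1 and x₀ = u, x₁, …, x_n = v in V with A(x_i, x_{i+1}) = 1 for all i < n. Let φ, ψ : Σ_A → ℝ be Hölder continuous, and assume there exist m ∈ ℕ with m ≥ 1 and θ < 0, θ' < 0 such that S_m φ(ω) ≤ θ and S_m ψ(ω) ≤ θ' for all ω ∈ Σ_A. Let α ≥ 0 and assume that for every periodic point ω ∈ Σ_A (i.e. σ^n ω = ω for some n ≥ 1) one has S_n ψ(ω) / S_n φ(ω) ≥ α. Then there exists a constant K ≥ 1 such that for all x ∈ Σ_A and all k ∈ ℕ, exp(S_{km} ψ(x))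 ≤ K · exp(α · S_{km} φ(x)). -/
open Classical

/-- The metric `d(ω,τ) = 2^{-inf{n : ω_n ≠ τ_n}}` on the sequence space `V^ℕ`
(and `d(ω,τ) = 0` if `ω = τ`). -/
noncomputable def seqDist {V : Type*} (ω τ : ℕ → V) : ℝ :=
  if ω = τ then 0 else (2 : ℝ) ^ (-((sInf {n : ℕ | ω n ≠ τ n} : ℕ) : ℤ))

/-- The left shift on the sequence space `V^ℕ`. -/
def shiftMap {V : Type*} (ω : ℕ → V) : ℕ → V := fun n => ω (n + 1)

/-- The `n`-th Birkhoff sum `S_n g = ∑_{j=0}^{n-1} g ∘ σ^j` with respect to the shift. -/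
noncomputable def birkSum {V : Type*} (g : (ℕ → V) → ℝ) (n : ℕ) (ω : ℕ → V) : ℝ :=
  ∑ j ∈ Finset.range n, g (shiftMap^[j] ω)

/-- The subshift of finite type `Σ_A` determined by the incidence relation `A`. -/
def shiftSpace {V : Type*} (A : V → V → Prop) : Set (ℕ → V) :=
  {ω | ∀ n : ℕ, A (ω n) (ω (n + 1))}

section Aux
variable {V : Type*}

lemma shiftMap_iterate (j : ℕ) : ∀ (ω : ℕ → V) (i : ℕ), shiftMap^[j] ω i = ω (i + j) := by
  induction j with
  | zero => intro ω i; simp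
  | succ j ih =>
    intro ω i
    rw [Function.iterate_succ_apply, ih (shiftMap ω) i]
    show ω (i + j + 1) = ω (i + (j + 1))
    ring_nf

lemma birkSum_add (g : (ℕ → V) → ℝ) (a b : ℕ) (ω : ℕ → V) :
    birkSum g (a + b) ω = birkSum g a ω + birkSum g b (shiftMap^[a] ω) := by
  induction b with
  | zero => simp [birkSum]
  | succ b ih =>
    have h1 : birkSum g (b+1) (shiftMap^[a] ω)
        = birkSum g b (shiftMap^[a] ω) + g (shiftMap^[a+b] ω) := by
      rw [birkSum, Finset.sum_range_succ, ← birkSum, ← Function.iterate_add_apply,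
        Nat.add_comm b a]
    rw [show a + (b+1) = (a+b)+1 by ring, birkSum, Finset.sum_range_succ, ← birkSum, ih, h1]
    ring

lemma birkSum_mul (g : (ℕ → V) → ℝ) (a b : ℕ) (ω : ℕ → V) :
    birkSum g (a * b) ω = ∑ i ∈ Finset.range a, birkSum g b (shiftMap^[i * b] ω) := by
  induction a with
  | zero => simp [birkSum]
  | succ a ih =>
    rw [show (a+1)*b = a*b + b by ring, birkSum_add, ih, Finset.sum_range_succ]

lemma shiftSpace_inv {A : V → V → Prop} {ω : ℕ → V} (hω : ω ∈ shiftSpace A) (j : ℕ) :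
    shiftMap^[j] ω ∈ shiftSpace A := by
  intro n
  rw [shiftMap_iterate, shiftMap_iterate]
  have := hω (n + j)
  rwa [show n + j + 1 = n + 1 + j by ring] at this

lemma seqDist_nonneg (ω τ : ℕ → V) : 0 ≤ seqDist ω τ := by
  unfold seqDist
  split
  · exact le_rfl
  · positivity

lemma seqDist_le_of_agree {ω τ : ℕ → V} {t : ℕ} (h : ∀ i < t, ω i = τ i) :
    seqDist ω τ ≤ (2⁻¹ : ℝ) ^ t := by
  unfold seqDist
  split
  · positivity
  · rename_i hne
    have hSne : {n : ℕ | ω n ≠ τ n}.Nonempty := by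
      by_contra hc
      apply hne
      funext i
      by_contra hi
      exact hc ⟨i, hi⟩
    have hts : t ≤ sInf {n : ℕ | ω n ≠ τ n} := by
      apply le_csInf hSne
      intro b hb
      by_contra hbt
      exact hb (h b (by omega))
    have : (2:ℝ) ^ (-((sInf {n : ℕ | ω n ≠ τ n} : ℕ) : ℤ)) ≤ (2:ℝ) ^ (-(t:ℤ)) := by
      apply zpow_le_zpow_right₀ one_le_two
      omega
    refine this.trans_eq ?_
    rw [zpow_neg, ← inv_zpow, zpow_natCast]

lemma bounded_of_holder {A : V → V → Prop} {g : (ℕ → V) → ℝ} {c γ : ℝ}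
    (hc : 0 ≤ c) (hγ : 0 < γ)
    (hg : ∀ ω ∈ shiftSpace A, ∀ τ ∈ shiftSpace A, |g ω - g τ| ≤ c * seqDist ω τ ^ γ)
    {z : ℕ → V} (hz : z ∈ shiftSpace A) {τ : ℕ → V} (hτ : τ ∈ shiftSpace A) :
    |g τ| ≤ |g z| + c := by
  have h1 : seqDist τ z ≤ 1 := by
    have := seqDist_le_of_agree (ω := τ) (τ := z) (t := 0) (by omega)
    simpa using this
  have h2 : seqDist τ z ^ γ ≤ 1 :=
    Real.rpow_le_one (seqDist_nonneg _ _) h1 hγ.le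
  have h3 := hg τ hτ z hz
  have h4 : c * seqDist τ z ^ γ ≤ c := by
    calc c * seqDist τ z ^ γ ≤ c * 1 := by
          exact mul_le_mul_of_nonneg_left h2 hc
      _ = c := mul_one c
  have := abs_sub_abs_le_abs_sub (g τ) (g z)
  linarith [h3.trans h4]

lemma geom_tail_le {r : ℝ} (h0 : 0 ≤ r) (h1 : r < 1) (n : ℕ) :
    ∑ i ∈ Finset.range n, r ^ i ≤ (1 - r)⁻¹ := by
  induction n with
  | zero =>
    simp only [Finset.range_zero, Finset.sum_empty]
    exact inv_nonneg.mpr (by linarith)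
  | succ n ih =>
    rw [geom_sum_succ]
    have h2 : r * ∑ i ∈ Finset.range n, r ^ i ≤ r * (1 - r)⁻¹ :=
      mul_le_mul_of_nonneg_left ih h0
    have hne : (1 : ℝ) - r ≠ 0 := by linarith
    have h3 : r * (1 - r)⁻¹ + 1 = (1 - r)⁻¹ := by
      field_simp
      ring
    linarith

lemma holder_birk {A : V → V → Prop} {g : (ℕ → V) → ℝ} {c γ : ℝ}
    (hc : 0 ≤ c) (hγ : 0 < γ)
    (hg : ∀ ω ∈ shiftSpace A, ∀ τ ∈ shiftSpace A, |g ω - g τ| ≤ c * seqDist ω τ ^ γ)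
    {x ω : ℕ → V} (hx : x ∈ shiftSpace A) (hω : ω ∈ shiftSpace A) (n : ℕ)
    (hag : ∀ i < n, x i = ω i) :
    |birkSum g n x - birkSum g n ω| ≤ c * (1 - (2⁻¹ : ℝ) ^ γ)⁻¹ := by
  set r := (2⁻¹ : ℝ) ^ γ with hrdef
  have hr0 : 0 < r := Real.rpow_pos_of_pos (by norm_num) _
  have hr1 : r < 1 := Real.rpow_lt_one (by norm_num) (by norm_num) hγ
  have key : ∀ j < n, |g (shiftMap^[j] x) - g (shiftMap^[j] ω)| ≤ c * r ^ (n - j) := by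
    intro j hj
    have hd : seqDist (shiftMap^[j] x) (shiftMap^[j] ω) ≤ (2⁻¹ : ℝ) ^ (n - j) := by
      apply seqDist_le_of_agree
      intro i hi
      rw [shiftMap_iterate, shiftMap_iterate]
      exact hag (i + j) (by omega)
    have hdγ : seqDist (shiftMap^[j] x) (shiftMap^[j] ω) ^ γ ≤ r ^ (n - j) := by
      have h1 : seqDist (shiftMap^[j] x) (shiftMap^[j] ω) ^ γ ≤ ((2⁻¹ : ℝ) ^ (n - j)) ^ γ :=
        Real.rpow_le_rpow (seqDist_nonneg _ _) hd hγ.le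
      refine h1.trans_eq ?_
      rw [← Real.rpow_natCast (2⁻¹ : ℝ) (n - j), ← Real.rpow_mul (by norm_num),
        mul_comm, Real.rpow_mul (by norm_num), Real.rpow_natCast]
    calc |g (shiftMap^[j] x) - g (shiftMap^[j] ω)|
        ≤ c * seqDist (shiftMap^[j] x) (shiftMap^[j] ω) ^ γ :=
          hg _ (shiftSpace_inv hx j) _ (shiftSpace_inv hω j)
      _ ≤ c * r ^ (n - j) := mul_le_mul_of_nonneg_left hdγ hc
  calc |birkSum g n x - birkSum g n ω|
      = |∑ j ∈ Finset.range n, (g (shiftMap^[j] x) - g (shiftMap^[j] ω))| := by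
        rw [birkSum, birkSum, Finset.sum_sub_distrib]
    _ ≤ ∑ j ∈ Finset.range n, |g (shiftMap^[j] x) - g (shiftMap^[j] ω)| :=
        Finset.abs_sum_le_sum_abs _ _
    _ ≤ ∑ j ∈ Finset.range n, c * r ^ (n - j) := by
        apply Finset.sum_le_sum
        intro j hj
        exact key j (Finset.mem_range.mp hj)
    _ = c * ∑ j ∈ Finset.range n, r ^ (n - j) := by rw [Finset.mul_sum]
    _ ≤ c * (1 - r)⁻¹ := by
        apply mul_le_mul_of_nonneg_left _ hc
        have hre : ∑ j ∈ Finset.range n, r ^ (n - j) = ∑ j ∈ Finset.range n, r ^ (j + 1) := by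
          rw [← Finset.sum_range_reflect (fun j => r ^ (j + 1)) n]
          apply Finset.sum_congr rfl
          intro j hj
          have hj' := Finset.mem_range.mp hj
          congr 1
          omega
        rw [hre]
        calc ∑ j ∈ Finset.range n, r ^ (j + 1)
            ≤ ∑ j ∈ Finset.range n, r ^ j := by
              apply Finset.sum_le_sum
              intro j _
              exact pow_le_pow_of_le_one hr0.le hr1.le (by omega)
          _ ≤ (1 - r)⁻¹ := geom_tail_le hr0.le hr1 n


lemma closeUp {A : V → V → Prop} {x : ℕ → V} (hx : x ∈ shiftSpace A) {n p : ℕ}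
    (hn : 1 ≤ n) (hp : 1 ≤ p) {y : ℕ → V}
    (hy0 : y 0 = x (n - 1)) (hyp : y p = x 0) (hye : ∀ i < p, A (y i) (y (i + 1))) :
    ∃ ω ∈ shiftSpace A, shiftMap^[n - 1 + p] ω = ω ∧ ∀ i < n, ω i = x i := by
  set q := n - 1 + p with hqdef
  have hq : 1 ≤ q := by omega
  have hnq : n ≤ q := by omega
  set c : ℕ → V := fun j => if j < n then x j else y (j - (n - 1)) with hcdef
  set ω : ℕ → V := fun j => c (j % q) with hωdef
  have hagree : ∀ i < n, ω i = x i := by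
    intro i hi
    show c (i % q) = x i
    rw [Nat.mod_eq_of_lt (by omega)]
    exact if_pos hi
  have hedge : ∀ r < q, A (c r) (c ((r + 1) % q)) := by
    intro r hr
    by_cases h1 : r + 1 < q
    · rw [Nat.mod_eq_of_lt h1]
      by_cases h2 : r + 1 < n
      · show A (if r < n then x r else _) (if r + 1 < n then x (r+1) else _)
        rw [if_pos (by omega), if_pos h2]
        exact hx r
      · by_cases h3 : r + 1 = n
        · show A (if r < n then x r else _) (if r + 1 < n then _ else y (r + 1 - (n - 1)))
          rw [if_pos (by omega), if_neg h2]
          have hxr : x r = y 0 := by rw [hy0]; congr 1; omega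
          have hyr : r + 1 - (n - 1) = 1 := by omega
          rw [hxr, hyr]
          exact hye 0 (by omega)
        · have h4 : n ≤ r := by omega
          show A (if r < n then _ else y (r - (n - 1))) (if r + 1 < n then _ else y (r + 1 - (n - 1)))
          rw [if_neg (by omega), if_neg (by omega)]
          have : r + 1 - (n - 1) = (r - (n - 1)) + 1 := by omega
          rw [this]
          exact hye (r - (n - 1)) (by omega)
    · have hrq : r + 1 = q := by omega
      have : (r + 1) % q = 0 := by rw [hrq, Nat.mod_self]
      rw [this]
      have hc0 : c 0 = y p := by
        show (if 0 < n then x 0 else _) = y p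
        rw [if_pos (by omega), hyp]
      rw [hc0]
      by_cases h2 : r < n
      · -- then p = 1 and r = n - 1
        have hp1 : p = 1 := by omega
        have hrn : r = n - 1 := by omega
        have : c r = y (p - 1) := by
          show (if r < n then x r else _) = y (p - 1)
          rw [if_pos h2, hrn, ← hy0]
          congr 1
          omega
        rw [this]
        have h5 := hye (p - 1) (by omega)
        rwa [show p - 1 + 1 = p by omega] at h5
      · have : c r = y (p - 1) := by
          show (if r < n then _ else y (r - (n - 1))) = y (p - 1)
          rw [if_neg h2]
          congr 1
          omega
        rw [this]
        have h5 := hye (p - 1) (by omega)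
        rwa [show p - 1 + 1 = p by omega] at h5
  refine ⟨ω, ?_, ?_, hagree⟩
  · intro j
    show A (c (j % q)) (c ((j + 1) % q))
    have h1 : (j + 1) % q = ((j % q) + 1) % q := by
      conv_lhs => rw [← Nat.mod_add_mod]
    rw [h1]
    exact hedge (j % q) (Nat.mod_lt _ (by omega))
  · funext j
    rw [shiftMap_iterate]
    show c ((j + q) % q) = c (j % q)
    rw [Nat.add_mod_right]

lemma birkSum_abs_le {A : V → V → Prop} {g : (ℕ → V) → ℝ} {Mg : ℝ}
    (hMg : ∀ τ ∈ shiftSpace A, |g τ| ≤ Mg) (t : ℕ) {τ : ℕ → V} (hτ : τ ∈ shiftSpace A) :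
    |birkSum g t τ| ≤ (t : ℝ) * Mg := by
  calc |birkSum g t τ| ≤ ∑ j ∈ Finset.range t, |g (shiftMap^[j] τ)| :=
        Finset.abs_sum_le_sum_abs _ _
    _ ≤ ∑ j ∈ Finset.range t, Mg :=
        Finset.sum_le_sum fun j _ => hMg _ (shiftSpace_inv hτ j)
    _ = (t : ℝ) * Mg := by rw [Finset.sum_const, Finset.card_range, nsmul_eq_mul]

end Aux

/-- The uniform Birkhoff-quotient estimate (`equ:birkhoffquotients`) from the proof of
Theorem `c0holder`: if `A` is irreducible, `φ, ψ` are Hölder continuous on `Σ_A` with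
eventually negative Birkhoff sums, and every periodic point satisfies
`S_n ψ / S_n φ ≥ α`, then `exp(S_{km} ψ(x)) ≤ K exp(α S_{km} φ(x))` uniformly. -/
theorem birkhoff_quotient_estimate
    {V : Type*} [Fintype V] (A : V → V → Prop)
    (hirr : ∀ u v : V, ∃ n : ℕ, 1 ≤ n ∧ ∃ x : ℕ → V, x 0 = u ∧ x n = v ∧
      ∀ i < n, A (x i) (x (i + 1)))
    (φ ψ : (ℕ → V) → ℝ)
    (cφ γφ : ℝ) (hcφ : 0 ≤ cφ) (hγφ : 0 < γφ)
    (hφ : ∀ ω ∈ shiftSpace A, ∀ τ ∈ shiftSpace A, |φ ω - φ τ| ≤ cφ * seqDist ω τ ^ γφ)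
    (cψ γψ : ℝ) (hcψ : 0 ≤ cψ) (hγψ : 0 < γψ)
    (hψ : ∀ ω ∈ shiftSpace A, ∀ τ ∈ shiftSpace A, |ψ ω - ψ τ| ≤ cψ * seqDist ω τ ^ γψ)
    (m : ℕ) (hm : 1 ≤ m) (θ θ' : ℝ) (hθ : θ < 0) (hθ' : θ' < 0)
    (hSφ : ∀ ω ∈ shiftSpace A, birkSum φ m ω ≤ θ)
    (hSψ : ∀ ω ∈ shiftSpace A, birkSum ψ m ω ≤ θ')
    (α : ℝ) (hα : 0 ≤ α)
    (hper : ∀ ω ∈ shiftSpace A, ∀ n : ℕ, 1 ≤ n → shiftMap^[n] ω = ω →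
      α ≤ birkSum ψ n ω / birkSum φ n ω) :
    ∃ K : ℝ, 1 ≤ K ∧ ∀ x ∈ shiftSpace A, ∀ k : ℕ,
      Real.exp (birkSum ψ (k * m) x) ≤ K * Real.exp (α * birkSum φ (k * m) x) := by
  by_cases hne : (shiftSpace A).Nonempty
  swap
  · exact ⟨1, le_rfl, fun x hx k => absurd ⟨x, hx⟩ hne⟩
  obtain ⟨z₀, hz₀⟩ := hne
  have hrψ1 : (2⁻¹ : ℝ) ^ γψ < 1 := Real.rpow_lt_one (by norm_num) (by norm_num) hγψ
  have hrφ1 : (2⁻¹ : ℝ) ^ γφ < 1 := Real.rpow_lt_one (by norm_num) (by norm_num) hγφ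
  set Cψ := cψ * (1 - (2⁻¹ : ℝ) ^ γψ)⁻¹ with hCψdef
  set Cφ := cφ * (1 - (2⁻¹ : ℝ) ^ γφ)⁻¹ with hCφdef
  have hCψ0 : 0 ≤ Cψ := mul_nonneg hcψ (inv_nonneg.mpr (by linarith))
  have hCφ0 : 0 ≤ Cφ := mul_nonneg hcφ (inv_nonneg.mpr (by linarith))
  set Mψ := |ψ z₀| + cψ with hMψdef
  set Mφ := |φ z₀| + cφ with hMφdef
  have hMψ0 : 0 ≤ Mψ := add_nonneg (abs_nonneg _) hcψ
  have hMφ0 : 0 ≤ Mφ := add_nonneg (abs_nonneg _) hcφ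
  have hMψ : ∀ τ ∈ shiftSpace A, |ψ τ| ≤ Mψ := fun τ hτ =>
    bounded_of_holder hcψ hγψ hψ hz₀ hτ
  have hMφ : ∀ τ ∈ shiftSpace A, |φ τ| ≤ Mφ := fun τ hτ =>
    bounded_of_holder hcφ hγφ hφ hz₀ hτ
  choose P hP1 Y hY0 hYP hYE using hirr
  set Pmax := Finset.univ.sup (fun w : V × V => P w.1 w.2) with hPmaxdef
  have hPle : ∀ u v, P u v ≤ Pmax := fun u v =>
    Finset.le_sup (f := fun w : V × V => P w.1 w.2) (Finset.mem_univ (u, v))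
  set L := Cψ + (Pmax : ℝ) * Mψ + α * Cφ + α * ((Pmax : ℝ) * Mφ) with hLdef
  have hL0 : 0 ≤ L := by
    apply add_nonneg
    apply add_nonneg
    apply add_nonneg hCψ0
    · exact mul_nonneg (Nat.cast_nonneg _) hMψ0
    · exact mul_nonneg hα hCφ0
    · exact mul_nonneg hα (mul_nonneg (Nat.cast_nonneg _) hMφ0)
  refine ⟨Real.exp L, Real.one_le_exp hL0, ?_⟩
  intro x hx k
  rcases Nat.eq_zero_or_pos k with hk | hk
  · subst hk
    simp only [Nat.zero_mul, birkSum, Finset.range_zero, Finset.sum_empty, Real.exp_zero,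
      mul_zero, mul_one]
    exact Real.one_le_exp hL0
  set n := k * m with hndef
  have hn : 1 ≤ n := Nat.one_le_iff_ne_zero.mpr (by positivity)
  set p := P (x (n - 1)) (x 0) with hpdef
  have hp1 : 1 ≤ p := hP1 _ _
  obtain ⟨ω, hω, hperω, hagree⟩ :=
    closeUp hx hn hp1 (hY0 (x (n - 1)) (x 0)) (hYP (x (n - 1)) (x 0)) (hYE (x (n - 1)) (x 0))
  set q := n - 1 + p with hqdef
  have hq1 : 1 ≤ q := by omega
  -- negativity of birkSum φ q ω
  have hd1 : birkSum φ (q * m) ω ≤ (q : ℝ) * θ := by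
    rw [birkSum_mul]
    calc ∑ i ∈ Finset.range q, birkSum φ m (shiftMap^[i * m] ω)
        ≤ ∑ i ∈ Finset.range q, θ :=
          Finset.sum_le_sum fun i _ => hSφ _ (shiftSpace_inv hω _)
      _ = (q : ℝ) * θ := by rw [Finset.sum_const, Finset.card_range, nsmul_eq_mul]
  have hfix : ∀ i : ℕ, shiftMap^[i * q] ω = ω := by
    intro i
    rw [mul_comm, Function.iterate_mul]
    exact Function.iterate_fixed hperω i
  have hd2 : birkSum φ (q * m) ω = (m : ℝ) * birkSum φ q ω := by
    rw [mul_comm q m, birkSum_mul]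
    have : ∀ i ∈ Finset.range m, birkSum φ q (shiftMap^[i * q] ω) = birkSum φ q ω := by
      intro i _
      rw [hfix]
    rw [Finset.sum_congr rfl this, Finset.sum_const, Finset.card_range, nsmul_eq_mul]
  have hqθ : (q : ℝ) * θ < 0 := by
    apply mul_neg_of_pos_of_neg _ hθ
    exact_mod_cast hq1
  have hSqφneg : birkSum φ q ω < 0 := by
    by_contra hcon
    push_neg at hcon
    have h0 : (0 : ℝ) ≤ (m : ℝ) * birkSum φ q ω :=
      mul_nonneg (Nat.cast_nonneg _) hcon
    rw [← hd2] at h0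
    linarith
  have hquot := hper ω hω q hq1 hperω
  have hkey : birkSum ψ q ω ≤ α * birkSum φ q ω := (le_div_iff_of_neg hSqφneg).mp hquot
  -- decompositions
  have hqeq : q = n + (p - 1) := by omega
  have hsψ : birkSum ψ q ω = birkSum ψ n ω + birkSum ψ (p - 1) (shiftMap^[n] ω) := by
    rw [hqeq, birkSum_add]
  have hsφ : birkSum φ q ω = birkSum φ n ω + birkSum φ (p - 1) (shiftMap^[n] ω) := by
    rw [hqeq, birkSum_add]
  have htψ := birkSum_abs_le hMψ (p - 1) (shiftSpace_inv hω n)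
  have htφ := birkSum_abs_le hMφ (p - 1) (shiftSpace_inv hω n)
  have hag' : ∀ i < n, x i = ω i := fun i hi => (hagree i hi).symm
  have hHψ := holder_birk hcψ hγψ hψ hx hω n hag'
  have hHφ := holder_birk hcφ hγφ hφ hx hω n hag'
  have hpP : ((p - 1 : ℕ) : ℝ) ≤ (Pmax : ℝ) := by
    have : p - 1 ≤ Pmax := le_trans (by omega) (hPle (x (n - 1)) (x 0))
    exact_mod_cast this
  have e1 := abs_le.mp hHψ
  have e2 := abs_le.mp hHφ
  have e3 := abs_le.mp htψ
  have e4 := abs_le.mp htφ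
  have e5 : α * birkSum φ q ω ≤ α * (birkSum φ n x + Cφ + ((p - 1 : ℕ) : ℝ) * Mφ) := by
    apply mul_le_mul_of_nonneg_left _ hα
    rw [hsφ]
    linarith [e2.1, e2.2, e4.1, e4.2]
  have e6 : α * (birkSum φ n x + Cφ + ((p - 1 : ℕ) : ℝ) * Mφ)
      = α * birkSum φ n x + α * Cφ + α * (((p - 1 : ℕ) : ℝ) * Mφ) := by ring
  have e7 : α * (((p - 1 : ℕ) : ℝ) * Mφ) ≤ α * ((Pmax : ℝ) * Mφ) :=
    mul_le_mul_of_nonneg_left (mul_le_mul_of_nonneg_right hpP hMφ0) hα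
  have e8 : ((p - 1 : ℕ) : ℝ) * Mψ ≤ (Pmax : ℝ) * Mψ := mul_le_mul_of_nonneg_right hpP hMψ0
  have e9 : birkSum ψ n ω ≤ birkSum ψ q ω + ((p - 1 : ℕ) : ℝ) * Mψ := by
    rw [hsψ]
    linarith [e3.1, e3.2]
  have hmain : birkSum ψ n x ≤ α * birkSum φ n x + L := by
    rw [hLdef]
    linarith [e1.2, e9, hkey, e5, e6, e7, e8]
  calc Real.exp (birkSum ψ n x) ≤ Real.exp (α * birkSum φ n x + L) :=
        Real.exp_le_exp.mpr hmain
    _ = Real.exp L * Real.exp (α * birkSum φ n x) := by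
        rw [Real.exp_add, mul_comm]
end
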